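/- Let α, β : ℤ × ℤ → ℂ be double sequences satisfying the triple sum identity (TSI), with β antisymmetric (β(n,k) = −β(k,n) for all n,k) and α(i,i) ≠ 0 for every integer i. Then for all integers k ≤ n: β(k,n) = ∑_{i=k+1}^{n} [ (α(i−1,k)/α(i−1,i−1)) · ∏_{j=i+1}^{n} (α(j−1,j)/α(j−1,j−1)) ] · β(i−1,i). -/

import Mathlib

lemma my_sum_Icc_succ_top {M : Type*} [AddCommMonoid M] {a b : ℤ} (h : a ≤ b + 1)
    (f : ℤ → M) :
    ∑ i ∈ Finset.Icc a (b + 1), f i = (∑ i ∈ Finset.Icc a b, f i) + f (b + 1) := by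
  rw [show Finset.Icc a (b+1) = insert (b+1) (Finset.Icc a b) by
    ext x; simp only [Finset.mem_Icc, Finset.mem_insert]; omega,
    Finset.sum_insert (by simp), add_comm]

lemma my_prod_Icc_succ_top {M : Type*} [CommMonoid M] {a b : ℤ} (h : a ≤ b + 1)
    (f : ℤ → M) :
    ∏ i ∈ Finset.Icc a (b + 1), f i = (∏ i ∈ Finset.Icc a b, f i) * f (b + 1) := by
  rw [show Finset.Icc a (b+1) = insert (b+1) (Finset.Icc a b) by
    ext x; simp only [Finset.mem_Icc, Finset.mem_insert]; omega,
    Finset.prod_insert (by simp), mul_comm]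

/-- Proposition 3.5 (Wang–Ma): if `α, β` satisfy the triple sum identity,
`β` is antisymmetric and `α i i ≠ 0` for all `i`, then for `k ≤ n`:
`β k n = ∑_{i=k+1}^{n} (α (i-1) k / α (i-1) (i-1)) *
  (∏_{j=i+1}^{n} α (j-1) j / α (j-1) (j-1)) * β (i-1) i`. -/
theorem beta_recurrence
    (α β : ℤ → ℤ → ℂ)
    (hTSI : ∀ n k p q : ℤ, α n p * β q k + α n q * β k p + α n k * β p q = 0)
    (hanti : ∀ n k : ℤ, β n k = -β k n)
    (hα : ∀ i : ℤ, α i i ≠ 0) :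
    ∀ k n : ℤ, k ≤ n →
      β k n =
        ∑ i ∈ Finset.Icc (k + 1) n,
          ((α (i - 1) k / α (i - 1) (i - 1)) *
            ∏ j ∈ Finset.Icc (i + 1) n, (α (j - 1) j / α (j - 1) (j - 1))) *
          β (i - 1) i := by
  intro k n hkn
  refine Int.le_induction (motive := fun n _ => β k n =
      ∑ i ∈ Finset.Icc (k + 1) n,
        ((α (i - 1) k / α (i - 1) (i - 1)) *
          ∏ j ∈ Finset.Icc (i + 1) n, (α (j - 1) j / α (j - 1) (j - 1))) *
        β (i - 1) i) ?_ ?_ n hkn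
  · beta_reduce
    have h0 : β k k = 0 := by linear_combination (hanti k k) / 2
    rw [h0, Finset.Icc_eq_empty (by omega), Finset.sum_empty]
  · intro n hkn ih
    beta_reduce
    beta_reduce at ih
    have hkey : α n n * β k (n + 1) = α n (n + 1) * β k n + α n k * β n (n + 1) := by
      linear_combination -hTSI n k n (n + 1) + α n n * hanti (n + 1) k
    -- split off top term of the sum
    rw [my_sum_Icc_succ_top (by omega)]
    have hsum : ∀ i ∈ Finset.Icc (k + 1) n,
        ((α (i - 1) k / α (i - 1) (i - 1)) *
          ∏ j ∈ Finset.Icc (i + 1) (n + 1), (α (j - 1) j / α (j - 1) (j - 1))) *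
          β (i - 1) i
        = (((α (i - 1) k / α (i - 1) (i - 1)) *
            ∏ j ∈ Finset.Icc (i + 1) n, (α (j - 1) j / α (j - 1) (j - 1))) *
            β (i - 1) i) * (α n (n + 1) / α n n) := by
      intro i hi
      simp only [Finset.mem_Icc] at hi
      rw [my_prod_Icc_succ_top (by omega)]
      simp only [add_sub_cancel_right]
      ring
    rw [Finset.sum_congr rfl hsum, ← Finset.sum_mul, ← ih]
    simp only [add_sub_cancel_right, Finset.Icc_eq_empty (by omega : ¬ n + 1 + 1 ≤ n + 1),
      Finset.prod_empty, mul_one]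
    have hdiv : β k (n + 1) = (α n (n + 1) * β k n + α n k * β n (n + 1)) / α n n := by
      rw [eq_div_iff (hα n)]
      linear_combination hkey
    rw [hdiv]
    ring
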